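/- (Domino-Deficient Direc Theorem) Let t ≥ 0, n = 3t+4, and let D ⊆ R(2,n) be a domino. If D is vertical, occupying {(1,c),(2,c)}, then R(2,n) \ D is tileable by L-trominoes if and only if c ≡ 1 (mod 3). If D is horizontal, occupying {(r,c),(r,c+1)} with r ∈ {1,2}, then R(2,n) \ D is tileable by L-trominoes if and only if c ≡ 2 (mod 3). -/

import Mathlib

abbrev Cell : Type := ℤ × ℤ

/-- The m×n rectangle of cells (i,j), 1 ≤ i ≤ m (row), 1 ≤ j ≤ n (column). -/
def rect (m n : ℤ) : Set Cell :=
  {c : Cell | 1 ≤ c.1 ∧ c.1 ≤ m ∧ 1 ≤ c.2 ∧ c.2 ≤ n}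

/-- An L-tromino: a 2×2 block minus one of its cells. -/
def IsTromino (T : Set Cell) : Prop :=
  ∃ i j : ℤ, ∃ c : Cell,
    c ∈ ({(i, j), (i + 1, j), (i, j + 1), (i + 1, j + 1)} : Set Cell) ∧
    T = ({(i, j), (i + 1, j), (i, j + 1), (i + 1, j + 1)} : Set Cell) \ {c}

def IsHDomino (D : Set Cell) : Prop := ∃ i j : ℤ, D = {(i, j), (i, j + 1)}

def IsVDomino (D : Set Cell) : Prop := ∃ i j : ℤ, D = {(i, j), (i + 1, j)}

def IsDomino (D : Set Cell) : Prop := IsHDomino D ∨ IsVDomino D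

/-- A partition of `S` into L-trominoes, identified with its set of pieces. -/
def IsTromTiling (P : Set (Set Cell)) (S : Set Cell) : Prop :=
  (∀ p ∈ P, IsTromino p) ∧ P.PairwiseDisjoint id ∧ ⋃₀ P = S

def Tileable (S : Set Cell) : Prop := ∃ P, IsTromTiling P S

/-- A partition of `S` into dominoes, identified with its set of pieces. -/
def IsDominoTiling (P : Set (Set Cell)) (S : Set Cell) : Prop :=
  (∀ p ∈ P, IsDomino p) ∧ P.PairwiseDisjoint id ∧ ⋃₀ P = S

/-- A partition of `S` into `k` L-trominoes and exactly one piece satisfying `dom`. -/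
def IsMixedTiling (P : Set (Set Cell)) (S : Set Cell)
    (dom : Set Cell → Prop) (k : ℕ) : Prop :=
  P.PairwiseDisjoint id ∧ ⋃₀ P = S ∧
  (∀ p ∈ P, IsTromino p ∨ dom p) ∧
  {p ∈ P | dom p}.ncard = 1 ∧ {p ∈ P | IsTromino p}.ncard = k

/-! ### generic helpers -/

def col (j : ℤ) : Set Cell := {x | x.2 = j}
def colle (j : ℤ) : Set Cell := {x | x.2 ≤ j}

lemma block_ncard (i j : ℤ) :
    ({(i, j), (i + 1, j), (i, j + 1), (i + 1, j + 1)} : Set Cell).ncard = 4 := by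
  rw [Set.ncard_insert_of_notMem (by simp only [Set.mem_insert_iff, Set.mem_singleton_iff, Prod.mk.injEq]; omega) (Set.toFinite _), Set.ncard_insert_of_notMem (by simp only [Set.mem_insert_iff, Set.mem_singleton_iff, Prod.mk.injEq]; omega) (Set.toFinite _), Set.ncard_pair (by simp only [ne_eq, Prod.mk.injEq]; omega)]

lemma tromino_spec {p : Set Cell} (h : IsTromino p) :
    p.Finite ∧ p.ncard = 3 ∧ ∃ j0 : ℤ,
      (∀ x ∈ p, x.2 = j0 ∨ x.2 = j0 + 1) ∧
      (∃ x ∈ p, x.2 = j0) ∧ (∃ x ∈ p, x.2 = j0 + 1) := by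
  obtain ⟨i, j, c, hc, hp⟩ := h
  simp only [Set.mem_insert_iff, Set.mem_singleton_iff] at hc
  have hfin : p.Finite := by rw [hp]; exact (Set.toFinite _).diff
  have hcard : p.ncard = 3 := by
    rw [hp, Set.ncard_diff_singleton_of_mem (by simp only [Set.mem_insert_iff, Set.mem_singleton_iff]; tauto), block_ncard]
  refine ⟨hfin, hcard, j, ?_, ?_, ?_⟩
  · rw [hp]; rintro ⟨x1, x2⟩ ⟨hx, -⟩
    simp only [Set.mem_insert_iff, Set.mem_singleton_iff, Prod.mk.injEq] at hx
    omega
  · rcases hc with hc | hc | hc | hc <;> subst hc <;> rw [hp] <;>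
      first
      | exact ⟨(i + 1, j), ⟨by simp, by simp only [Set.mem_singleton_iff, Prod.mk.injEq]; omega⟩, rfl⟩
      | exact ⟨(i, j), ⟨by simp, by simp only [Set.mem_singleton_iff, Prod.mk.injEq]; omega⟩, rfl⟩
  · rcases hc with hc | hc | hc | hc <;> subst hc <;> rw [hp] <;>
      first
      | exact ⟨(i + 1, j + 1), ⟨by simp, by simp only [Set.mem_singleton_iff, Prod.mk.injEq]; omega⟩, rfl⟩
      | exact ⟨(i, j + 1), ⟨by simp, by simp only [Set.mem_singleton_iff, Prod.mk.injEq]; omega⟩, rfl⟩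

lemma tromino_cut {p : Set Cell} (h : IsTromino p) (j : ℤ) :
    3 ∣ (p ∩ colle j).ncard ∨ p ∩ colle j = p ∩ col j := by
  obtain ⟨hfin, hcard, j0, hcols, ⟨x, hx, hxj⟩, ⟨y, hy, hyj⟩⟩ := tromino_spec h
  rcases lt_trichotomy j0 j with h1 | h1 | h1
  · -- j0 ≤ j - 1 : p ⊆ colle j
    left
    have : p ∩ colle j = p := by
      apply Set.inter_eq_self_of_subset_left
      intro z hz
      have := hcols z hz
      simp only [colle, Set.mem_setOf_eq]
      omega
    rw [this, hcard]
  · right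
    ext z
    simp only [Set.mem_inter_iff, colle, col, Set.mem_setOf_eq, and_congr_right_iff]
    intro hz
    have := hcols z hz
    omega
  · left
    have : p ∩ colle j = ∅ := by
      ext z
      simp only [Set.mem_inter_iff, colle, Set.mem_setOf_eq, Set.mem_empty_iff_false,
        iff_false, not_and]
      intro hz
      have := hcols z hz
      omega
    rw [this]; simp

open scoped Classical in
lemma sum_ncard_biUnion (F : Finset (Set Cell)) (g : Set Cell → Set Cell)
    (hsub : ∀ p, g p ⊆ p) (hfin : ∀ p ∈ F, (g p).Finite)
    (hdisj : (F : Set (Set Cell)).PairwiseDisjoint id) :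
    (∑ p ∈ F, (g p).ncard) = (⋃ p ∈ F, g p).ncard := by
  induction F using Finset.induction with
  | empty => simp
  | @insert a F ha ih =>
    rw [Finset.sum_insert ha]
    have hdF : (F : Set (Set Cell)).PairwiseDisjoint id := by
      apply hdisj.subset; simp
    rw [ih (fun p hp => hfin p (Finset.mem_insert_of_mem hp)) hdF]
    have hd : Disjoint (g a) (⋃ p ∈ F, g p) := by
      apply Set.disjoint_iUnion₂_right.mpr
      intro p hp
      have hap : a ≠ p := by rintro rfl; exact ha hp
      have := hdisj (by simp) (by simp [hp]) hap
      exact Set.disjoint_of_subset (hsub a) (hsub p) this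
    rw [Finset.set_biUnion_insert,
      Set.ncard_union_eq hd (hfin a (Finset.mem_insert_self a F))
        (Set.Finite.biUnion F.finite_toSet (fun p hp => hfin p (Finset.mem_insert_of_mem hp)))]

open scoped Classical in
lemma boundary {P : Set (Set Cell)} {S : Set Cell} (hP : IsTromTiling P S)
    (hS : S.Finite) (j : ℤ) :
    ∃ A B : ℕ, (S ∩ colle j).ncard = A + B ∧ 3 ∣ A ∧ B ≤ (S ∩ col j).ncard := by
  obtain ⟨htrom, hdisj, hUnion⟩ := hP
  have hPsub : ∀ p ∈ P, p ⊆ S := by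
    intro p hp
    rw [← hUnion]; exact Set.subset_sUnion_of_mem hp
  have hPfin : P.Finite := hS.finite_subsets.subset hPsub
  set F := hPfin.toFinset with hF
  have hFcoe : (F : Set (Set Cell)) = P := hPfin.coe_toFinset
  have hmem : ∀ p, p ∈ F ↔ p ∈ P := fun p => hPfin.mem_toFinset
  have hgfin : ∀ p ∈ F, (p ∩ colle j).Finite :=
    fun p hp => hS.subset ((Set.inter_subset_left).trans (hPsub p ((hmem p).mp hp)))
  have hcolfin : (S ∩ col j).Finite := hS.subset Set.inter_subset_left
  -- S ∩ colle j as a disjoint union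
  have hU : S ∩ colle j = ⋃ p ∈ F, (p ∩ colle j) := by
    rw [← hUnion, Set.sUnion_eq_biUnion, Set.iUnion₂_inter]
    rw [← hFcoe]
    simp
  have hsum : (S ∩ colle j).ncard = ∑ p ∈ F, (p ∩ colle j).ncard := by
    rw [hU, sum_ncard_biUnion F (fun p => p ∩ colle j) (fun p => Set.inter_subset_left)
      hgfin (by rw [hFcoe]; exact hdisj)]
  set cross : Set Cell → Prop := fun p => p ∩ colle j = p ∩ col j with hcross
  refine ⟨∑ p ∈ F.filter (fun p => ¬ cross p), (p ∩ colle j).ncard,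
          ∑ p ∈ F.filter (fun p => cross p), (p ∩ colle j).ncard, ?_, ?_, ?_⟩
  · rw [hsum, ← Finset.sum_filter_add_sum_filter_not F cross, add_comm]
  · refine Finset.dvd_sum ?_
    intro p hp
    rw [Finset.mem_filter] at hp
    rcases tromino_cut (htrom p ((hmem p).mp hp.1)) j with h | h
    · exact h
    · exact absurd h hp.2
  · have h1 : ∑ p ∈ F.filter (fun p => cross p), (p ∩ colle j).ncard
        = ∑ p ∈ F.filter (fun p => cross p), (p ∩ col j).ncard := by
      refine Finset.sum_congr rfl ?_
      intro p hp
      rw [Finset.mem_filter] at hp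
      rw [hp.2]
    rw [h1, sum_ncard_biUnion _ (fun p => p ∩ col j) (fun p => Set.inter_subset_left)
      (fun p hp => hcolfin.subset (Set.inter_subset_inter_left _
        (hPsub p ((hmem p).mp (Finset.mem_filter.mp hp).1))))
      (hdisj.subset (by rw [← hFcoe]; intro x hx; exact (Finset.mem_filter.mp hx).1))]
    apply Set.ncard_le_ncard ?_ hcolfin
    refine Set.iUnion₂_subset ?_
    intro p hp
    exact Set.inter_subset_inter_left _ (hPsub p ((hmem p).mp (Finset.mem_filter.mp hp).1))

lemma rect_eq_coe (m n : ℤ) : rect m n = ↑(Finset.Icc 1 m ×ˢ Finset.Icc 1 n) := by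
  ext ⟨i, j⟩
  simp only [rect, Set.mem_setOf_eq, Finset.coe_product, Set.mem_prod, Finset.coe_Icc,
    Set.mem_Icc]
  tauto

lemma rect_finite (m n : ℤ) : (rect m n).Finite := by
  rw [rect_eq_coe]; exact (Finset.Icc 1 m ×ˢ Finset.Icc 1 n).finite_toSet

lemma rect_ncard (m n : ℤ) : (rect m n).ncard = m.toNat * n.toNat := by
  rw [rect_eq_coe, Set.ncard_coe_finset, Finset.card_product, Int.card_Icc, Int.card_Icc]
  congr 1 <;> omega

lemma vert_nec {n c : ℤ} (h1 : 1 ≤ c) (hcn : c ≤ n)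
    (hT : Tileable (rect 2 n \ ({(1, c), (2, c)} : Set Cell))) : c % 3 = 1 := by
  obtain ⟨P, hP⟩ := hT
  set S := rect 2 n \ ({(1, c), (2, c)} : Set Cell) with hSdef
  have hS : S.Finite := (rect_finite 2 n).subset Set.diff_subset
  obtain ⟨A, B, hN, hA, hB⟩ := boundary hP hS c
  have hcolle : S ∩ colle c = rect 2 (c - 1) := by
    ext ⟨i, j⟩
    simp only [hSdef, rect, colle, Set.mem_inter_iff, Set.mem_diff, Set.mem_setOf_eq,
      Set.mem_insert_iff, Set.mem_singleton_iff, Prod.mk.injEq]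
    omega
  have hcol : S ∩ col c = ∅ := by
    ext ⟨i, j⟩
    simp only [hSdef, rect, col, Set.mem_inter_iff, Set.mem_diff, Set.mem_setOf_eq,
      Set.mem_insert_iff, Set.mem_singleton_iff, Prod.mk.injEq, Set.mem_empty_iff_false,
      iff_false]
    omega
  rw [hcolle, rect_ncard] at hN
  rw [hcol] at hB
  simp only [Set.ncard_empty, Nat.le_zero] at hB
  have h2 : (2 : ℤ).toNat = 2 := rfl
  rw [h2] at hN
  omega

lemma horiz_nec {n r c : ℤ} (hr : r = 1 ∨ r = 2) (h1 : 1 ≤ c) (hcn : c + 1 ≤ n)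
    (hT : Tileable (rect 2 n \ ({(r, c), (r, c + 1)} : Set Cell))) : c % 3 = 2 := by
  obtain ⟨P, hP⟩ := hT
  set S := rect 2 n \ ({(r, c), (r, c + 1)} : Set Cell) with hSdef
  have hS : S.Finite := (rect_finite 2 n).subset Set.diff_subset
  have h0 : ¬ (c % 3 = 0) := by
    intro hc
    obtain ⟨A, B, hN, hA, hB⟩ := boundary hP hS c
    have hcolle : S ∩ colle c = rect 2 c \ {(r, c)} := by
      ext ⟨i, j⟩
      simp only [hSdef, rect, colle, Set.mem_inter_iff, Set.mem_diff, Set.mem_setOf_eq,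
        Set.mem_insert_iff, Set.mem_singleton_iff, Prod.mk.injEq]
      omega
    have hmem : ((r, c) : Cell) ∈ rect 2 c := by
      simp only [rect, Set.mem_setOf_eq]; omega
    have hcol : S ∩ col c ⊆ {((3 - r, c) : Cell)} := by
      rintro ⟨i, j⟩ hij
      simp only [hSdef, rect, col, Set.mem_inter_iff, Set.mem_diff, Set.mem_setOf_eq,
        Set.mem_insert_iff, Set.mem_singleton_iff, Prod.mk.injEq] at hij ⊢
      omega
    have hBle : B ≤ 1 := hB.trans ((Set.ncard_le_ncard hcol (Set.finite_singleton _)).trans_eq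
      (Set.ncard_singleton _))
    rw [hcolle, Set.ncard_diff_singleton_of_mem hmem, rect_ncard] at hN
    have h2 : (2 : ℤ).toNat = 2 := rfl
    rw [h2] at hN
    omega
  have h1' : ¬ (c % 3 = 1) := by
    intro hc
    obtain ⟨A, B, hN, hA, hB⟩ := boundary hP hS (c + 1)
    have hcolle : S ∩ colle (c + 1) = (rect 2 (c + 1) \ {(r, c)}) \ {(r, c + 1)} := by
      ext ⟨i, j⟩
      simp only [hSdef, rect, colle, Set.mem_inter_iff, Set.mem_diff, Set.mem_setOf_eq,
        Set.mem_insert_iff, Set.mem_singleton_iff, Prod.mk.injEq]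
      omega
    have hmem1 : ((r, c) : Cell) ∈ rect 2 (c + 1) := by
      simp only [rect, Set.mem_setOf_eq]; omega
    have hmem2 : ((r, c + 1) : Cell) ∈ rect 2 (c + 1) \ {(r, c)} := by
      simp only [rect, Set.mem_diff, Set.mem_setOf_eq, Set.mem_singleton_iff, Prod.mk.injEq]
      omega
    have hcol : S ∩ col (c + 1) ⊆ {((3 - r, c + 1) : Cell)} := by
      rintro ⟨i, j⟩ hij
      simp only [hSdef, rect, col, Set.mem_inter_iff, Set.mem_diff, Set.mem_setOf_eq,
        Set.mem_insert_iff, Set.mem_singleton_iff, Prod.mk.injEq] at hij ⊢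
      omega
    have hBle : B ≤ 1 := hB.trans ((Set.ncard_le_ncard hcol (Set.finite_singleton _)).trans_eq
      (Set.ncard_singleton _))
    rw [hcolle, Set.ncard_diff_singleton_of_mem hmem2,
      Set.ncard_diff_singleton_of_mem hmem1, rect_ncard] at hN
    have h2 : (2 : ℤ).toNat = 2 := rfl
    rw [h2] at hN
    omega
  omega

/-! ### Sufficiency: constructions -/

lemma tileable_empty : Tileable (∅ : Set Cell) :=
  ⟨∅, by simp, by simp, by simp⟩

lemma tileable_tromino {T : Set Cell} (h : IsTromino T) : Tileable T :=
  ⟨{T}, fun p hp => by rwa [Set.mem_singleton_iff.mp hp],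
    Set.pairwiseDisjoint_singleton _ _, Set.sUnion_singleton _⟩

lemma tileable_union {S T : Set Cell} (hS : Tileable S) (hT : Tileable T)
    (h : Disjoint S T) : Tileable (S ∪ T) := by
  obtain ⟨P, hP1, hP2, hP3⟩ := hS
  obtain ⟨Q, hQ1, hQ2, hQ3⟩ := hT
  have hPS : ∀ p ∈ P, p ⊆ S := fun p hp => hP3 ▸ Set.subset_sUnion_of_mem hp
  have hQT : ∀ q ∈ Q, q ⊆ T := fun q hq => hQ3 ▸ Set.subset_sUnion_of_mem hq
  refine ⟨P ∪ Q, ?_, ?_, ?_⟩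
  · intro p hp; rcases hp with hp | hp
    · exact hP1 p hp
    · exact hQ1 p hp
  · intro p hp q hq hne
    rcases hp with hp | hp <;> rcases hq with hq | hq
    · exact hP2 hp hq hne
    · exact Disjoint.mono (hPS p hp) (hQT q hq) h
    · exact Disjoint.mono (hQT p hp) (hPS q hq) h.symm
    · exact hQ2 hp hq hne
  · rw [Set.sUnion_union, hP3, hQ3]

lemma tromino_LA (a : ℤ) : IsTromino ({(1, a), (2, a), (1, a + 1)} : Set Cell) := by
  refine ⟨1, a, (2, a + 1), by simp, ?_⟩
  ext ⟨i, j⟩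
  simp only [Set.mem_insert_iff, Set.mem_singleton_iff, Set.mem_diff, Prod.mk.injEq]
  omega

lemma tromino_LB (a : ℤ) : IsTromino ({(2, a), (1, a + 1), (2, a + 1)} : Set Cell) := by
  refine ⟨1, a, (1, a), by simp, ?_⟩
  ext ⟨i, j⟩
  simp only [Set.mem_insert_iff, Set.mem_singleton_iff, Set.mem_diff, Prod.mk.injEq]
  omega

def stripN (a : ℤ) (k : ℕ) : Set Cell :=
  {x | (x.1 = 1 ∨ x.1 = 2) ∧ a ≤ x.2 ∧ x.2 < a + 3 * k}

lemma tileable_stripN (a : ℤ) (k : ℕ) : Tileable (stripN a k) := by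
  induction k generalizing a with
  | zero =>
    have : stripN a 0 = ∅ := by
      ext ⟨i, j⟩; simp only [stripN, Set.mem_setOf_eq, Set.mem_empty_iff_false, iff_false]; omega
    rw [this]; exact tileable_empty
  | succ k ih =>
    have hsplit : stripN a (k + 1) =
        (({(1, a), (2, a), (1, a + 1)} : Set Cell) ∪
          ({(2, a + 1), (1, a + 2), (2, a + 2)} : Set Cell)) ∪ stripN (a + 3) k := by
      ext ⟨i, j⟩
      simp only [stripN, Set.mem_setOf_eq, Set.mem_union, Set.mem_insert_iff,
        Set.mem_singleton_iff, Prod.mk.injEq, Nat.cast_add, Nat.cast_one]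
      omega
    rw [hsplit]
    refine tileable_union (tileable_union (tileable_tromino (tromino_LA a))
      (tileable_tromino ?_) ?_) (ih (a + 3)) ?_
    · have h := tromino_LB (a + 1)
      have : a + 1 + 1 = a + 2 := by ring
      rwa [this] at h
    · rw [Set.disjoint_left]
      rintro ⟨i, j⟩ hx hx'
      simp only [Set.mem_insert_iff, Set.mem_singleton_iff, Prod.mk.injEq] at hx hx'
      omega
    · rw [Set.disjoint_left]
      rintro ⟨i, j⟩ hx hx'
      simp only [stripN, Set.mem_union, Set.mem_insert_iff, Set.mem_singleton_iff,
        Set.mem_setOf_eq, Prod.mk.injEq] at hx hx'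
      omega

lemma vert_suf {n c : ℤ} (h1 : 1 ≤ c) (hcn : c ≤ n) (hc : c % 3 = 1) (hn3 : n % 3 = 1) :
    Tileable (rect 2 n \ ({(1, c), (2, c)} : Set Cell)) := by
  obtain ⟨s, hs⟩ : ∃ s : ℕ, (s : ℤ) * 3 = c - 1 := ⟨((c - 1) / 3).toNat, by omega⟩
  obtain ⟨u, hu⟩ : ∃ u : ℕ, (u : ℤ) * 3 = n - c := ⟨((n - c) / 3).toNat, by omega⟩
  have hsplit : rect 2 n \ ({(1, c), (2, c)} : Set Cell) = stripN 1 s ∪ stripN (c + 1) u := by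
    ext ⟨i, j⟩
    simp only [rect, stripN, Set.mem_diff, Set.mem_setOf_eq, Set.mem_union, Set.mem_insert_iff,
      Set.mem_singleton_iff, Prod.mk.injEq]
    omega
  rw [hsplit]
  refine tileable_union (tileable_stripN 1 s) (tileable_stripN (c + 1) u) ?_
  rw [Set.disjoint_left]
  rintro ⟨i, j⟩ hx hx'
  simp only [stripN, Set.mem_setOf_eq] at hx hx'
  omega

lemma horiz_suf {n r c : ℤ} (hr : r = 1 ∨ r = 2) (h1 : 1 ≤ c) (hc2 : c + 2 ≤ n)
    (hc : c % 3 = 2) (hn3 : n % 3 = 1) :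
    Tileable (rect 2 n \ ({(r, c), (r, c + 1)} : Set Cell)) := by
  obtain ⟨s, hs⟩ : ∃ s : ℕ, (s : ℤ) * 3 = c - 2 := ⟨((c - 2) / 3).toNat, by omega⟩
  obtain ⟨u, hu⟩ : ∃ u : ℕ, (u : ℤ) * 3 = n - c - 2 := ⟨((n - c - 2) / 3).toNat, by omega⟩
  have hT1 : IsTromino ({(1, c - 1), (2, c - 1), (3 - r, c)} : Set Cell) := by
    refine ⟨1, c - 1, (r, c), ?_, ?_⟩
    · simp only [Set.mem_insert_iff, Set.mem_singleton_iff, Prod.mk.injEq]; omega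
    · ext ⟨i, j⟩
      simp only [Set.mem_insert_iff, Set.mem_singleton_iff, Set.mem_diff, Prod.mk.injEq]
      omega
  have hT2 : IsTromino ({(3 - r, c + 1), (1, c + 2), (2, c + 2)} : Set Cell) := by
    refine ⟨1, c + 1, (r, c + 1), ?_, ?_⟩
    · rcases hr with rfl | rfl <;> simp
    · ext ⟨i, j⟩
      simp only [Set.mem_insert_iff, Set.mem_singleton_iff, Set.mem_diff, Prod.mk.injEq]
      omega
  have hsplit : rect 2 n \ ({(r, c), (r, c + 1)} : Set Cell) =
      (stripN 1 s ∪ ({(1, c - 1), (2, c - 1), (3 - r, c)} : Set Cell)) ∪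
      (({(3 - r, c + 1), (1, c + 2), (2, c + 2)} : Set Cell) ∪ stripN (c + 3) u) := by
    ext ⟨i, j⟩
    simp only [rect, stripN, Set.mem_diff, Set.mem_setOf_eq, Set.mem_union, Set.mem_insert_iff,
      Set.mem_singleton_iff, Prod.mk.injEq]
    omega
  rw [hsplit]
  refine tileable_union
    (tileable_union (tileable_stripN 1 s) (tileable_tromino hT1) ?_)
    (tileable_union (tileable_tromino hT2) (tileable_stripN (c + 3) u) ?_) ?_ <;>
  · rw [Set.disjoint_left]
    rintro ⟨i, j⟩ hx hx'
    simp only [stripN, Set.mem_setOf_eq, Set.mem_union, Set.mem_insert_iff,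
      Set.mem_singleton_iff, Prod.mk.injEq] at hx hx'
    omega

/-- Domino-Deficient Direc Theorem. -/
theorem domino_deficient_direc (t : ℕ) (n : ℤ) (hn : n = 3 * t + 4) :
    (∀ c : ℤ, ({(1, c), (2, c)} : Set Cell) ⊆ rect 2 n →
      (Tileable (rect 2 n \ ({(1, c), (2, c)} : Set Cell)) ↔ c % 3 = 1)) ∧
    (∀ r c : ℤ, (r = 1 ∨ r = 2) → ({(r, c), (r, c + 1)} : Set Cell) ⊆ rect 2 n →
      (Tileable (rect 2 n \ ({(r, c), (r, c + 1)} : Set Cell)) ↔ c % 3 = 2)) := by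
  have hn3 : n % 3 = 1 := by omega
  constructor
  · intro c hsub
    have hc1 : ((1 : ℤ), c) ∈ rect 2 n := hsub (by simp)
    simp only [rect, Set.mem_setOf_eq] at hc1
    constructor
    · exact fun h => vert_nec (by omega) (by omega) h
    · intro h
      exact vert_suf (by omega) (by omega) h hn3
  · intro r c hr hsub
    have hc1 : (r, c) ∈ rect 2 n := hsub (by simp)
    have hc2 : (r, c + 1) ∈ rect 2 n := hsub (by simp)
    simp only [rect, Set.mem_setOf_eq] at hc1 hc2
    constructor
    · exact fun h => horiz_nec hr (by omega) (by omega) h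
    · intro h
      exact horiz_suf hr (by omega) (by omega) h hn3
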